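/- arXiv:2104.08411 — 2 statements merged into one kernel-verified Lean document; each statement's English description precedes it below -/
import Mathlib

section
/- Let g ∈ BMO^w on an interval J and define T_g(f) = ∫_J f(ξ) g(ξ) dλ(ξ) for f in the special atom space B¹. Then T_g is a bounded linear functional on B¹ with operator norm ‖T_g‖_{(B¹)*} ≤ ‖g‖_{BMO^w}. -/
open MeasureTheory ENNReal

/-- A (symmetric) interval `[x−h, x+h]` with `h > 0`. -/
def IsIntvl (I : Set ℝ) : Prop :=
  ∃ x h : ℝ, 0 < h ∧ I = Set.Icc (x - h) (x + h)

/-- A special atom supported in an interval contained in `J`: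
`b = (1/λ(I))(χ_R − χ_L)` where `I = [x−h,x+h] ⊆ J`, `R = [x,x+h]`, `L = [x−h,x)`. -/
def IsSpecialAtomOn (J : Set ℝ) (b : ℝ → ℝ) : Prop :=
  ∃ x h : ℝ, 0 < h ∧ Set.Icc (x - h) (x + h) ⊆ J ∧
    b = fun ξ => (1 / (2 * h)) *
      ((Set.Icc x (x + h)).indicator (fun _ => (1 : ℝ)) ξ -
       (Set.Ico (x - h) x).indicator (fun _ => (1 : ℝ)) ξ)

/-- The `B¹` norm: infimum of `Σ|cₙ|` over atomic decompositions `f = Σ cₙ bₙ`. -/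
noncomputable def B1Norm (J : Set ℝ) (f : ℝ → ℝ) : ℝ≥0∞ :=
  ⨅ (c : ℕ → ℝ) (b : ℕ → ℝ → ℝ)
    (_ : (∀ m, IsSpecialAtomOn J (b m)) ∧ Summable (fun m => |c m|) ∧
      ∀ ξ, HasSum (fun m => c m * b m ξ) (f ξ)),
    ENNReal.ofReal (∑' m, |c m|)

/-- The `BMO^w` norm over intervals: `‖g‖ = sup_I g_I + sup_I |⨍_I (g − g_I)|`. -/
noncomputable def BMOwNorm (g : ℝ → ℝ) : ℝ≥0∞ :=
  (⨆ (I : Set ℝ) (_ : IsIntvl I), ENNReal.ofReal |⨍ ξ in I, g ξ|) +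
  (⨆ (I : Set ℝ) (_ : IsIntvl I),
    ENNReal.ofReal |⨍ ξ in I, (g ξ - |⨍ η in I, g η|)|)

/-- A special atom is measurable. -/
lemma measurable_of_specialAtom {J : Set ℝ} {b : ℝ → ℝ} (hb : IsSpecialAtomOn J b) :
    Measurable b := by
  obtain ⟨x, h, hh, -, rfl⟩ := hb
  exact (((measurable_indicator_const_iff (1:ℝ)).2 measurableSet_Icc).sub
    ((measurable_indicator_const_iff (1:ℝ)).2 measurableSet_Ico)).const_mul _

/-- The `L¹`-norm of a special atom is at most `1`. -/
lemma lintegral_nnnorm_specialAtom_le {J : Set ℝ} {b : ℝ → ℝ} (hb : IsSpecialAtomOn J b) :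
    ∫⁻ ξ, (‖b ξ‖₊ : ℝ≥0∞) ≤ 1 := by
  obtain ⟨x, h, hh, -, rfl⟩ := hb
  have hpt : ∀ ξ, (‖(1 / (2 * h)) *
      ((Set.Icc x (x + h)).indicator (fun _ => (1 : ℝ)) ξ -
       (Set.Ico (x - h) x).indicator (fun _ => (1 : ℝ)) ξ)‖₊ : ℝ≥0∞)
      ≤ (Set.Icc (x - h) (x + h)).indicator (fun _ => ENNReal.ofReal (1 / (2 * h))) ξ := by
    intro ξ
    by_cases hξ : ξ ∈ Set.Icc (x - h) (x + h)
    · rw [Set.indicator_of_mem hξ]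
      rw [← enorm_eq_nnnorm, ← ofReal_norm, Real.norm_eq_abs]
      apply ENNReal.ofReal_le_ofReal
      rw [abs_mul]
      have h1 : |1 / (2 * h)| = 1 / (2 * h) := abs_of_nonneg (by positivity)
      rw [h1]
      have : |(Set.Icc x (x + h)).indicator (fun _ => (1 : ℝ)) ξ -
          (Set.Ico (x - h) x).indicator (fun _ => (1 : ℝ)) ξ| ≤ 1 := by
        by_cases h2 : ξ ∈ Set.Icc x (x + h) <;> by_cases h3 : ξ ∈ Set.Ico (x - h) x <;>
          simp [Set.indicator_of_mem, Set.indicator_of_notMem, h2, h3] <;>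
          first
          | norm_num
          | (exfalso; exact absurd h2.1 (not_le.2 h3.2))
      calc 1 / (2 * h) * |(Set.Icc x (x + h)).indicator (fun _ => (1 : ℝ)) ξ -
          (Set.Ico (x - h) x).indicator (fun _ => (1 : ℝ)) ξ|
          ≤ 1 / (2 * h) * 1 := by
            exact mul_le_mul_of_nonneg_left this (by positivity)
        _ = 1 / (2 * h) := mul_one _
    · rw [Set.indicator_of_notMem hξ]
      have h2 : ξ ∉ Set.Icc x (x + h) := by
        intro hc
        exact hξ ⟨le_trans (by linarith) hc.1, hc.2⟩
      have h3 : ξ ∉ Set.Ico (x - h) x := by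
        intro hc
        exact hξ ⟨hc.1, le_trans hc.2.le (by linarith)⟩
      simp [Set.indicator_of_notMem, h2, h3]
  calc ∫⁻ ξ, (‖(1 / (2 * h)) *
        ((Set.Icc x (x + h)).indicator (fun _ => (1 : ℝ)) ξ -
         (Set.Ico (x - h) x).indicator (fun _ => (1 : ℝ)) ξ)‖₊ : ℝ≥0∞)
      ≤ ∫⁻ ξ, (Set.Icc (x - h) (x + h)).indicator
          (fun _ => ENNReal.ofReal (1 / (2 * h))) ξ := lintegral_mono hpt
    _ = ENNReal.ofReal (1 / (2 * h)) * volume (Set.Icc (x - h) (x + h)) := by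
        rw [lintegral_indicator measurableSet_Icc]
        simp [Measure.restrict_apply, MeasurableSet.univ]
    _ = ENNReal.ofReal (1 / (2 * h)) * ENNReal.ofReal (2 * h) := by
        rw [Real.volume_Icc, show x + h - (x - h) = 2 * h by ring]
    _ = ENNReal.ofReal (1 / (2 * h) * (2 * h)) := by
        exact (ENNReal.ofReal_mul (by positivity)).symm
    _ ≤ 1 := by
        rw [one_div, inv_mul_cancel₀ (by positivity)]
        simp

/-- From a `HasSum` representation, bound the `ennnorm` of the sum by the sum of `ennnorm`s. -/
lemma ennnorm_le_tsum_of_hasSum {u : ℕ → ℝ} {s : ℝ} (hu : HasSum u s) :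
    (‖s‖₊ : ℝ≥0∞) ≤ ∑' m, (‖u m‖₊ : ℝ≥0∞) := by
  by_cases hs : Summable fun m => ‖u m‖₊
  · rw [← ENNReal.coe_tsum hs]
    have hsum : Summable fun m => ‖u m‖ := by
      simpa [← NNReal.summable_coe] using hs
    have h1 : ‖s‖ ≤ ∑' m, ‖u m‖ := by
      rw [← hu.tsum_eq]
      exact norm_tsum_le_tsum_norm hsum
    have h2 : ‖s‖₊ ≤ ∑' m, ‖u m‖₊ := by
      rw [← NNReal.coe_le_coe, coe_nnnorm, NNReal.coe_tsum]
      simpa using h1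
    exact ENNReal.coe_le_coe.2 h2
  · have : (∑' m, (‖u m‖₊ : ℝ≥0∞)) = ⊤ := by
      by_contra hc
      exact hs (ENNReal.tsum_coe_ne_top_iff_summable.1 hc)
    rw [this]; exact le_top

/-- Hölder-type inequality: for `g ∈ BMO^w` the functional `T_g(f) = ∫_J f g` is bounded
on the special atom space `B¹`, with `|T_g(f)| ≤ ‖f‖_{B¹} ‖g‖_{BMO^w}`;
hence `‖T_g‖_{(B¹)*} ≤ ‖g‖_{BMO^w}`. -/
theorem stmt7 (J : Set ℝ) (hJ : IsIntvl J)
    (g : ℝ → ℝ) (hg : LocallyIntegrable g volume) (hgBMO : BMOwNorm g < ⊤)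
    (f : ℝ → ℝ) (hf : B1Norm J f < ⊤)
    (hint : IntegrableOn (fun ξ => f ξ * g ξ) J volume) :
    ENNReal.ofReal |∫ ξ in J, f ξ * g ξ| ≤ B1Norm J f * BMOwNorm g := by
  classical
  set S : ℝ≥0∞ := ⨆ (I : Set ℝ) (_ : IsIntvl I), ENNReal.ofReal |⨍ ξ in I, g ξ| with hSdef
  have hSle : S ≤ BMOwNorm g := by
    rw [BMOwNorm]; exact le_self_add
  have hStop : S ≠ ⊤ := ne_top_of_le_ne_top hgBMO.ne hSle
  set A : ℝ := S.toReal with hAdef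
  have hA0 : 0 ≤ A := ENNReal.toReal_nonneg
  have havg : ∀ I : Set ℝ, IsIntvl I → |⨍ ξ in I, g ξ| ≤ A := by
    intro I hI
    have h1 : ENNReal.ofReal |⨍ ξ in I, g ξ| ≤ S := by
      rw [hSdef]
      exact le_iSup_of_le I (le_iSup_of_le hI le_rfl)
    have h2 := ENNReal.toReal_mono hStop h1
    rwa [ENNReal.toReal_ofReal (abs_nonneg _)] at h2
  -- a.e. bound |g| ≤ A via Lebesgue differentiation
  have hgae : ∀ᵐ ξ, |g ξ| ≤ A := by
    filter_upwards [IsUnifLocDoublingMeasure.ae_tendsto_average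
      (μ := (volume : Measure ℝ)) hg 1] with x hx
    have htend : Filter.Tendsto (fun r : ℝ => ⨍ y in Metric.closedBall x r, g y)
        (nhdsWithin 0 (Set.Ioi 0)) (nhds (g x)) := by
      apply hx (fun _ => x) id Filter.tendsto_id
      filter_upwards [self_mem_nhdsWithin] with r hr
      simp only [one_mul]
      exact Metric.mem_closedBall_self (le_of_lt hr)
    have habs : Filter.Tendsto (fun r : ℝ => |⨍ y in Metric.closedBall x r, g y|)
        (nhdsWithin 0 (Set.Ioi 0)) (nhds |g x|) := htend.abs
    refine le_of_tendsto habs ?_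
    filter_upwards [self_mem_nhdsWithin] with r hr
    exact havg _ ⟨x, r, hr, Real.closedBall_eq_Icc⟩
  have hofA : ENNReal.ofReal A ≤ BMOwNorm g := by
    rw [hAdef, ENNReal.ofReal_toReal hStop]; exact hSle
  -- key estimate for each decomposition
  have key : ∀ (c : ℕ → ℝ) (b : ℕ → ℝ → ℝ),
      (∀ m, IsSpecialAtomOn J (b m)) → Summable (fun m => |c m|) →
      (∀ ξ, HasSum (fun m => c m * b m ξ) (f ξ)) →
      ENNReal.ofReal |∫ ξ in J, f ξ * g ξ| ≤
        ENNReal.ofReal (∑' m, |c m|) * BMOwNorm g := by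
    intro c b hb hsum hrep
    have hbmeas : ∀ m, Measurable (b m) := fun m => measurable_of_specialAtom (hb m)
    have h1 : ENNReal.ofReal |∫ ξ in J, f ξ * g ξ| ≤
        ∫⁻ ξ in J, (‖f ξ * g ξ‖₊ : ℝ≥0∞) := by
      calc ENNReal.ofReal |∫ ξ in J, f ξ * g ξ|
          = (‖∫ ξ in J, f ξ * g ξ‖₊ : ℝ≥0∞) := by
            rw [← enorm_eq_nnnorm, ← ofReal_norm, Real.norm_eq_abs]
        _ ≤ _ := enorm_integral_le_lintegral_enorm _
    have h2 : ∫⁻ ξ in J, (‖f ξ * g ξ‖₊ : ℝ≥0∞) ≤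
        ENNReal.ofReal A * ∫⁻ ξ in J, (‖f ξ‖₊ : ℝ≥0∞) := by
      rw [← lintegral_const_mul' _ _ ENNReal.ofReal_ne_top]
      apply lintegral_mono_ae
      filter_upwards [ae_restrict_of_ae hgae] with ξ hξ
      rw [← enorm_eq_nnnorm, ← ofReal_norm, ← enorm_eq_nnnorm, ← ofReal_norm, Real.norm_eq_abs,
        Real.norm_eq_abs, ← ENNReal.ofReal_mul hA0, abs_mul]
      exact ENNReal.ofReal_le_ofReal (by
        rw [mul_comm A _]
        exact mul_le_mul_of_nonneg_left hξ (abs_nonneg _))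
    have h3 : ∫⁻ ξ in J, (‖f ξ‖₊ : ℝ≥0∞) ≤ ∑' m, ENNReal.ofReal |c m| := by
      have hpt : ∀ ξ, (‖f ξ‖₊ : ℝ≥0∞) ≤ ∑' m, (‖c m * b m ξ‖₊ : ℝ≥0∞) := fun ξ =>
        ennnorm_le_tsum_of_hasSum (hrep ξ)
      calc ∫⁻ ξ in J, (‖f ξ‖₊ : ℝ≥0∞)
          ≤ ∫⁻ ξ in J, ∑' m, (‖c m * b m ξ‖₊ : ℝ≥0∞) := lintegral_mono hpt
        _ = ∑' m, ∫⁻ ξ in J, (‖c m * b m ξ‖₊ : ℝ≥0∞) :=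
            lintegral_tsum fun m =>
              ((hbmeas m).const_mul (c m)).nnnorm.coe_nnreal_ennreal.aemeasurable
        _ ≤ ∑' m, ENNReal.ofReal |c m| := by
            apply ENNReal.tsum_le_tsum
            intro m
            have : ∀ ξ, (‖c m * b m ξ‖₊ : ℝ≥0∞) =
                ENNReal.ofReal |c m| * (‖b m ξ‖₊ : ℝ≥0∞) := by
              intro ξ
              rw [← enorm_eq_nnnorm, ← ofReal_norm, ← enorm_eq_nnnorm, ← ofReal_norm,
                ← ENNReal.ofReal_mul (abs_nonneg _), Real.norm_eq_abs, Real.norm_eq_abs,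
                abs_mul]
            simp_rw [this]
            rw [lintegral_const_mul' _ _ ENNReal.ofReal_ne_top]
            calc ENNReal.ofReal |c m| * ∫⁻ ξ in J, (‖b m ξ‖₊ : ℝ≥0∞)
                ≤ ENNReal.ofReal |c m| * 1 := by
                  apply mul_le_mul_right
                  exact le_trans (setLIntegral_le_lintegral _ _)
                    (lintegral_nnnorm_specialAtom_le (hb m))
              _ = ENNReal.ofReal |c m| := mul_one _
    have htsum : (∑' m, ENNReal.ofReal |c m|) = ENNReal.ofReal (∑' m, |c m|) :=
      (ENNReal.ofReal_tsum_of_nonneg (fun m => abs_nonneg _) hsum).symm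
    calc ENNReal.ofReal |∫ ξ in J, f ξ * g ξ|
        ≤ ENNReal.ofReal A * ∫⁻ ξ in J, (‖f ξ‖₊ : ℝ≥0∞) := le_trans h1 h2
      _ ≤ ENNReal.ofReal A * ENNReal.ofReal (∑' m, |c m|) := by
          rw [← htsum]; exact mul_le_mul_right h3 _
      _ = ENNReal.ofReal (∑' m, |c m|) * ENNReal.ofReal A := mul_comm _ _
      _ ≤ ENNReal.ofReal (∑' m, |c m|) * BMOwNorm g := mul_le_mul_right hofA _
  -- conclude by taking the infimum
  by_cases hz : BMOwNorm g = 0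
  · -- then g = 0 a.e., so the integral vanishes
    have hS0 : S = 0 := le_antisymm (hz ▸ hSle) zero_le
    have hA0' : A = 0 := by rw [hAdef, hS0]; simp
    have hg0 : ∀ᵐ ξ, g ξ = 0 := by
      filter_upwards [hgae] with ξ hξ
      rw [hA0'] at hξ
      exact abs_eq_zero.1 (le_antisymm hξ (abs_nonneg _))
    have : ∫ ξ in J, f ξ * g ξ = 0 := by
      apply integral_eq_zero_of_ae
      filter_upwards [ae_restrict_of_ae hg0] with ξ hξ
      simp [hξ]
    rw [this, abs_zero, ENNReal.ofReal_zero]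
    exact zero_le
  · have hnt : BMOwNorm g ≠ ⊤ := hgBMO.ne
    rw [B1Norm, ← ENNReal.div_le_iff_le_mul (Or.inl hz) (Or.inl hnt)]
    refine le_iInf fun c => le_iInf fun b => le_iInf fun hcb => ?_
    rw [ENNReal.div_le_iff_le_mul (Or.inl hz) (Or.inl hnt)]
    exact key c b hcb.1 hcb.2.1 hcb.2.2
end

section
/- If g ∈ BMO^w on an interval J, then the distributional derivative pairing satisfies: for every x, h with I = [x−h, x+h] ⊆ J and special atom b = (1/(2h))(χ_{[x,x+h]} − χ_{[x−h,x)}), one has |∫_I b(ξ)(g(ξ) − g_I) dξ| ≤ ‖g‖_{BMO^w}; consequently sup_{I,h} |∫_I b g dλ| ≤ ‖g‖_{BMO^w}, which is the Zygmund-class Λ*-seminorm bound of an antiderivative of g: |G(x+h) + G(x−h) − 2G(x)|/(2h) ≤ ‖g‖_{BMO^w} where G′ = g. -/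
open MeasureTheory ENNReal

/-- If `g ∈ BMO^w` on `J = [a₀, b₀]`, then for every interval `I = [x−h, x+h] ⊆ J` and
special atom `b = (1/(2h))(χ_{[x,x+h]} − χ_{[x−h,x)})`:
`|∫_I b (g − g_I)| ≤ ‖g‖_{BMO^w}`, `|∫_I b g| ≤ ‖g‖_{BMO^w}`, and the Zygmund-class
bound `|G(x+h) + G(x−h) − 2G(x)|/(2h) ≤ ‖g‖_{BMO^w}` for the antiderivative
`G(x) = ∫_{a₀}^x g`. -/
theorem stmt19 (a₀ b₀ : ℝ) (hab : a₀ < b₀)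
    (g : ℝ → ℝ) (hg : LocallyIntegrable g volume) (hgBMO : BMOwNorm g < ⊤)
    (G : ℝ → ℝ) (hG : ∀ x, G x = ∫ t in a₀..x, g t)
    (x h : ℝ) (hh : 0 < h) (hsub : Set.Icc (x - h) (x + h) ⊆ Set.Icc a₀ b₀)
    (I : Set ℝ) (hI : I = Set.Icc (x - h) (x + h))
    (b : ℝ → ℝ)
    (hb : b = fun ξ => (1 / (2 * h)) *
      ((Set.Icc x (x + h)).indicator (fun _ => (1 : ℝ)) ξ -
       (Set.Ico (x - h) x).indicator (fun _ => (1 : ℝ)) ξ)) :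
    ENNReal.ofReal |∫ ξ in I, b ξ * (g ξ - |⨍ η in I, g η|)| ≤ BMOwNorm g ∧
    ENNReal.ofReal |∫ ξ in I, b ξ * g ξ| ≤ BMOwNorm g ∧
    ENNReal.ofReal (|G (x + h) + G (x - h) - 2 * G x| / (2 * h)) ≤ BMOwNorm g := by
  have h2 : (0:ℝ) < 2 * h := by linarith
  have hfrac : (0:ℝ) < 1 / (2 * h) := by positivity
  subst hI
  -- subsets
  have hS1I : Set.Icc x (x+h) ⊆ Set.Icc (x-h) (x+h) :=
    Set.Icc_subset_Icc (by linarith) le_rfl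
  have hS2I : Set.Ico (x-h) x ⊆ Set.Icc (x-h) (x+h) :=
    Set.Ico_subset_Icc_self.trans (Set.Icc_subset_Icc le_rfl (by linarith))
  -- integrability
  have hgJ : IntegrableOn g (Set.Icc a₀ b₀) := hg.integrableOn_isCompact isCompact_Icc
  have hgI : IntegrableOn g (Set.Icc (x-h) (x+h)) := hgJ.mono_set hsub
  -- volumes
  have vI : volume (Set.Icc (x-h) (x+h)) = ENNReal.ofReal (2*h) := by
    rw [Real.volume_Icc]; congr 1; ring
  have vS1 : volume (Set.Icc x (x+h)) = ENNReal.ofReal h := by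
    rw [Real.volume_Icc]; congr 1; ring
  have vS2 : volume (Set.Ico (x-h) x) = ENNReal.ofReal h := by
    rw [Real.volume_Ico]; congr 1; ring
  -- key computation of the atom pairing
  have key : ∀ f : ℝ → ℝ, IntegrableOn f (Set.Icc (x-h) (x+h)) →
      (∫ ξ in Set.Icc (x-h) (x+h), b ξ * f ξ)
      = (1/(2*h)) * ((∫ ξ in Set.Icc x (x+h), f ξ) - ∫ ξ in Set.Ico (x-h) x, f ξ) := by
    intro f hf
    have heq : ∀ ξ, b ξ * f ξ
        = (1/(2*h)) * ((Set.Icc x (x+h)).indicator f ξ - (Set.Ico (x-h) x).indicator f ξ) := by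
      intro ξ
      rw [hb]
      by_cases h₁ : ξ ∈ Set.Icc x (x+h) <;> by_cases h₂ : ξ ∈ Set.Ico (x-h) x <;>
        simp [Set.indicator_of_mem, Set.indicator_of_notMem, h₁, h₂] <;> ring
    simp_rw [heq]
    rw [integral_const_mul,
      integral_sub (hf.indicator measurableSet_Icc) (hf.indicator measurableSet_Ico),
      setIntegral_indicator measurableSet_Icc, setIntegral_indicator measurableSet_Ico,
      Set.inter_eq_right.mpr hS1I, Set.inter_eq_right.mpr hS2I]
  -- averages as scaled integrals
  have avg1 : ⨍ ξ in Set.Icc x (x+h), g ξ = h⁻¹ * ∫ ξ in Set.Icc x (x+h), g ξ := by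
    rw [setAverage_eq, measureReal_def, vS1, ENNReal.toReal_ofReal hh.le, smul_eq_mul]
  have avg2 : ⨍ ξ in Set.Icc (x-h) x, g ξ = h⁻¹ * ∫ ξ in Set.Icc (x-h) x, g ξ := by
    rw [setAverage_eq, measureReal_def, Real.volume_Icc, show x - (x-h) = h by ring,
      ENNReal.toReal_ofReal hh.le, smul_eq_mul]
  have hQi : (∫ ξ in Set.Ico (x-h) x, g ξ) = ∫ ξ in Set.Icc (x-h) x, g ξ :=
    (integral_Icc_eq_integral_Ico (f := g) (μ := volume) (x := x-h) (y := x)).symm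
  -- first sup term bounds averages over intervals
  have hA : ∀ a b : ℝ, a < b →
      ENNReal.ofReal |⨍ ξ in Set.Icc a b, g ξ| ≤ BMOwNorm g := by
    intro a b hab'
    have hIv : IsIntvl (Set.Icc a b) :=
      ⟨(a+b)/2, (b-a)/2, by linarith, by congr 1 <;> ring⟩
    calc ENNReal.ofReal |⨍ ξ in Set.Icc a b, g ξ|
        ≤ ⨆ (I : Set ℝ) (_ : IsIntvl I), ENNReal.ofReal |⨍ ξ in I, g ξ| :=
          le_iSup₂ (f := fun (I : Set ℝ) (_ : IsIntvl I) =>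
            ENNReal.ofReal |⨍ ξ in I, g ξ|) (Set.Icc a b) hIv
      _ ≤ BMOwNorm g := le_self_add
  set P := ∫ ξ in Set.Icc x (x+h), g ξ with hP
  set Q := ∫ ξ in Set.Icc (x-h) x, g ξ with hQdef
  -- the main bound
  have main : ENNReal.ofReal |(1/(2*h)) * (P - Q)| ≤ BMOwNorm g := by
    have habs : |(1/(2*h)) * (P - Q)| ≤ max (|h⁻¹ * P|) (|h⁻¹ * Q|) := by
      rw [abs_mul, abs_of_pos hfrac, abs_mul, abs_mul,
        abs_of_pos (show (0:ℝ) < h⁻¹ by positivity)]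
      have h1 : |P - Q| ≤ |P| + |Q| := by
        have := abs_add_le P (-Q); simpa [sub_eq_add_neg] using this
      rcases le_total |P| |Q| with hc | hc
      · refine le_trans ?_ (le_max_right _ _)
        rw [div_mul_eq_mul_div, div_le_iff₀ h2]
        have he : h⁻¹ * |Q| * (2*h) = 2 * |Q| := by field_simp
        rw [he]; nlinarith [abs_nonneg (P - Q)]
      · refine le_trans ?_ (le_max_left _ _)
        rw [div_mul_eq_mul_div, div_le_iff₀ h2]
        have he : h⁻¹ * |P| * (2*h) = 2 * |P| := by field_simp
        rw [he]; nlinarith [abs_nonneg (P - Q)]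
    rcases le_total (|h⁻¹ * P|) (|h⁻¹ * Q|) with hc | hc
    · rw [max_eq_right hc] at habs
      refine le_trans (ENNReal.ofReal_le_ofReal habs) ?_
      have := hA (x-h) x (by linarith)
      rwa [avg2] at this
    · rw [max_eq_left hc] at habs
      refine le_trans (ENNReal.ofReal_le_ofReal habs) ?_
      have := hA x (x+h) (by linarith)
      rwa [avg1] at this
  have keyg := key g hgI
  rw [hQi] at keyg
  -- first claim: the constant integrates out
  set c := |⨍ η in Set.Icc (x-h) (x+h), g η| with hcdef
  have hconst : IntegrableOn (fun _ : ℝ => c) (Set.Icc (x-h) (x+h)) := by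
    refine (integrableOn_const_iff).mpr (Or.inr ?_)
    rw [vI]; exact ENNReal.ofReal_lt_top
  have keyc := key (fun ξ => g ξ - c) (hgI.sub hconst)
  have int1 : (∫ ξ in Set.Icc x (x+h), (g ξ - c)) = P - h * c := by
    rw [integral_sub (hgI.mono_set hS1I) (hconst.mono_set hS1I), setIntegral_const, measureReal_def,
      vS1, ENNReal.toReal_ofReal hh.le, smul_eq_mul, ← hP]
  have int2 : (∫ ξ in Set.Ico (x-h) x, (g ξ - c)) = Q - h * c := by
    rw [integral_sub (hgI.mono_set hS2I) (hconst.mono_set hS2I), setIntegral_const, measureReal_def,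
      vS2, ENNReal.toReal_ofReal hh.le, smul_eq_mul, hQi]
  beta_reduce at keyc
  rw [int1, int2] at keyc
  have keyc' : (∫ ξ in Set.Icc (x-h) (x+h), b ξ * (g ξ - c)) = (1/(2*h)) * (P - Q) := by
    rw [keyc]; ring
  refine ⟨?_, ?_, ?_⟩
  · rw [keyc']; exact main
  · rw [keyg]; exact main
  · -- Zygmund bound for the antiderivative
    have hax : a₀ ≤ x - h := (hsub ⟨le_rfl, by linarith⟩).1
    have hxb : x + h ≤ b₀ := (hsub ⟨by linarith, le_rfl⟩).2
    have ii : ∀ u v : ℝ, a₀ ≤ u → u ≤ v → v ≤ b₀ → IntervalIntegrable g volume u v := by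
      intro u v h1 h2' h3
      exact (hgJ.mono_set (by
        rw [Set.uIcc_of_le h2']; exact Set.Icc_subset_Icc h1 h3)).intervalIntegrable
    have iax : IntervalIntegrable g volume a₀ x := ii a₀ x le_rfl (by linarith) (by linarith)
    have ixh : IntervalIntegrable g volume x (x+h) := ii x (x+h) (by linarith) (by linarith) hxb
    have iah : IntervalIntegrable g volume a₀ (x-h) := ii a₀ (x-h) le_rfl hax (by linarith)
    have ihx : IntervalIntegrable g volume (x-h) x := ii (x-h) x hax (by linarith) (by linarith)
    have s1 : (∫ t in a₀..x, g t) + (∫ t in x..(x+h), g t) = ∫ t in a₀..(x+h), g t :=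
      intervalIntegral.integral_add_adjacent_intervals iax ixh
    have s2 : (∫ t in a₀..(x-h), g t) + (∫ t in (x-h)..x, g t) = ∫ t in a₀..x, g t :=
      intervalIntegral.integral_add_adjacent_intervals iah ihx
    have e1 : (∫ t in x..(x+h), g t) = P := by
      rw [intervalIntegral.integral_of_le (by linarith : x ≤ x + h), hP,
        integral_Icc_eq_integral_Ioc]
    have e2 : (∫ t in (x-h)..x, g t) = Q := by
      rw [intervalIntegral.integral_of_le (by linarith : x - h ≤ x), hQdef,
        integral_Icc_eq_integral_Ioc]
    have eG : G (x+h) + G (x-h) - 2 * G x = P - Q := by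
      rw [hG, hG, hG, ← e1, ← e2]; linarith [s1, s2]
    rw [eG, show |P - Q| / (2*h) = |(1/(2*h)) * (P - Q)| by
      rw [abs_mul, abs_of_pos hfrac]; ring]
    exact main
end
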